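/- Let F be a steerable image family of radius n and angular bandlimit V, and consider the measurement model with N > 6n, translations t₁,…,t_p ∈ {3n,…,N−3n−1}² satisfying the separation condition ‖t_i − t_j‖_∞ ≥ 4n for all i ≠ j. Then for all u, v ∈ L = {0,…,2n−1}², E[A³_M[u,v]] = γ·S₃[u,v] + γ·S₁·σ²·(δ[u] + δ[v] + δ[u−v]), where A³_M[u,v] := (1/N²)·Σ_{j∈ℤ²} M[j]M[j+u]M[j+v], S₁ := (1/(4n²))·(1/2π)∫₀^{2π} Σ_{ℓ∈ℤ²} F_φ[ℓ] dφ, S₃[u,v] := (1/(4n²))·(1/2π)∫₀^{2π} Σ_{ℓ∈ℤ²} F_φ[ℓ]F_φ[ℓ+u]F_φ[ℓ+v] dφ, γ := 4pn²/N², and δ is the Kronecker delta on ℤ². -/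

import Mathlib

open Real MeasureTheory ProbabilityTheory intervalIntegral
open scoped NNReal ENNReal

noncomputable section

/-- A steerable image family of radius `n` and angular bandlimit `V`. -/
def Steerable (n V : ℕ) (F : ℝ → ℤ × ℤ → ℝ) (g : ℤ → ℤ × ℤ → ℂ) : Prop :=
  (∀ ν : ℤ, ∀ ℓ : ℤ × ℤ, (n : ℤ) < max |ℓ.1| |ℓ.2| → g ν ℓ = 0) ∧
  (∀ φ : ℝ, ∀ ℓ : ℤ × ℤ,
    (F φ ℓ : ℂ) =
      ∑ ν ∈ Finset.Icc (-(V : ℤ)) (V : ℤ), g ν ℓ * Complex.exp (Complex.I * (ν : ℂ) * (φ : ℂ)))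

/-- Membership in the grid `{0,…,N−1}²`. -/
def InGrid (N : ℕ) (ℓ : ℤ × ℤ) : Prop :=
  0 ≤ ℓ.1 ∧ ℓ.1 ≤ (N : ℤ) - 1 ∧ 0 ≤ ℓ.2 ∧ ℓ.2 ≤ (N : ℤ) - 1

instance (N : ℕ) (ℓ : ℤ × ℤ) : Decidable (InGrid N ℓ) := by
  unfold InGrid; infer_instance

namespace Stmt15Aux

lemma integrable_pow_mul_gauss {b : ℝ} (hb : 0 < b) (k : ℕ) :
    Integrable (fun x : ℝ => x ^ k * Real.exp (-b * x ^ 2)) := by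
  have h := integrable_rpow_mul_exp_neg_mul_sq hb (s := (k : ℝ))
    (lt_of_lt_of_le (by norm_num) (Nat.cast_nonneg k))
  simpa [Real.rpow_natCast] using h

lemma tendsto_mul_exp_atTop {b : ℝ} (hb : 0 < b) :
    Filter.Tendsto (fun x : ℝ => x * Real.exp (-b * x ^ 2)) Filter.atTop (nhds 0) := by
  have h := rpow_mul_exp_neg_mul_sq_isLittleO_exp_neg hb 1
  have h1 : Filter.Tendsto (fun x : ℝ => (1/2 : ℝ) * x) Filter.atTop Filter.atTop :=
    Filter.Tendsto.const_mul_atTop (by norm_num) Filter.tendsto_id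
  have h2 : Filter.Tendsto (fun x : ℝ => Real.exp (-(1/2) * x)) Filter.atTop (nhds 0) := by
    have h3 := Real.tendsto_exp_atBot.comp (Filter.tendsto_neg_atTop_atBot.comp h1)
    refine h3.congr fun x => ?_
    simp [Function.comp, neg_mul]
  have := h.isBigO.trans_tendsto h2
  refine this.congr fun x => ?_
  rw [Real.rpow_one]

lemma integral_sq_mul_gauss {b : ℝ} (hb : 0 < b) :
    ∫ x : ℝ, x ^ 2 * Real.exp (-b * x ^ 2) = (2*b)⁻¹ * Real.sqrt (π / b) := by
  set f : ℝ → ℝ := fun x => -(2 * b)⁻¹ * (x * Real.exp (-b * x ^ 2)) with hf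
  set f' : ℝ → ℝ := fun x => x ^ 2 * Real.exp (-b * x ^ 2)
    - (2*b)⁻¹ * Real.exp (-b * x ^ 2) with hf'
  have hb' : (2*b) ≠ 0 := by positivity
  have hderiv : ∀ x : ℝ, HasDerivAt f (f' x) x := by
    intro x
    have h1 : HasDerivAt (fun y : ℝ => -b * y ^ 2) (-b * (2 * x)) x := by
      simpa [mul_comm] using ((hasDerivAt_pow 2 x).const_mul (-b))
    have h2 : HasDerivAt (fun y : ℝ => Real.exp (-b * y ^ 2))
        (Real.exp (-b * x^2) * (-b*(2*x))) x := h1.exp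
    have h3 := ((hasDerivAt_id x).mul h2).const_mul (-(2 * b)⁻¹)
    refine h3.congr_deriv ?_
    simp only [hf', id_eq]
    field_simp
    ring
  have hint : Integrable f' := by
    refine ((integrable_pow_mul_gauss hb 2).sub ?_)
    exact (integrable_exp_neg_mul_sq hb).const_mul _
  have htop : Filter.Tendsto f Filter.atTop (nhds 0) := by
    have h := Filter.Tendsto.const_mul (-(2*b)⁻¹) (tendsto_mul_exp_atTop hb)
    rw [mul_zero] at h
    exact h
  have hbot : Filter.Tendsto f Filter.atBot (nhds 0) := by
    have h1 : Filter.Tendsto (fun x : ℝ => f (-x)) Filter.atTop (nhds 0) := by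
      have h := htop.neg
      rw [neg_zero] at h
      refine h.congr fun x => ?_
      show -f x = f (-x)
      simp only [hf]
      rw [show ((-x:ℝ))^2 = x^2 by ring]
      ring
    have h2 := h1.comp Filter.tendsto_neg_atBot_atTop
    refine h2.congr fun x => ?_
    simp only [Function.comp_def, neg_neg]
  have hIoi : ∫ x in Set.Ioi (0:ℝ), f' x = 0 - f 0 :=
    integral_Ioi_of_hasDerivAt_of_tendsto' (fun x _ => hderiv x) hint.integrableOn htop
  have hIic : ∫ x in Set.Iic (0:ℝ), f' x = f 0 - 0 :=
    integral_Iic_of_hasDerivAt_of_tendsto' (fun x _ => hderiv x) hint.integrableOn hbot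
  have hall : ∫ x : ℝ, f' x = 0 := by
    rw [← integral_Iic_add_Ioi hint.integrableOn hint.integrableOn, hIoi, hIic]
    ring
  have hsplit : ∀ x : ℝ, x ^ 2 * Real.exp (-b * x ^ 2)
      = f' x + (2*b)⁻¹ * Real.exp (-b * x ^ 2) := by
    intro x; simp only [hf']; ring
  rw [integral_congr_ae (ae_of_all _ hsplit)]
  rw [integral_add hint ((integrable_exp_neg_mul_sq hb).const_mul _), hall,
    MeasureTheory.integral_const_mul, integral_gaussian, zero_add]

lemma gauss_pow_integrable (v : ℝ≥0) (k : ℕ) :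
    Integrable (fun x : ℝ => x ^ k) (gaussianReal 0 v) := by
  by_cases hv : v = 0
  · subst hv
    rw [gaussianReal_zero_var]
    refine ⟨(measurable_id.pow_const k).aestronglyMeasurable, ?_⟩
    rw [HasFiniteIntegral, lintegral_dirac]
    exact ENNReal.coe_lt_top
  · have hv' : 0 < (v:ℝ) := by positivity
    have hb : 0 < (2*(v:ℝ))⁻¹ := by positivity
    rw [gaussianReal_of_var_ne_zero 0 hv,
      integrable_withDensity_iff (measurable_gaussianPDF 0 v)
        (ae_of_all _ fun x => ENNReal.ofReal_lt_top)]
    have := (integrable_pow_mul_gauss hb k).const_mul ((Real.sqrt (2*π*(v:ℝ)))⁻¹)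
    refine this.congr (ae_of_all _ fun x => ?_)
    show (Real.sqrt (2*π*(v:ℝ)))⁻¹ * (x ^ k * Real.exp (-(2*(v:ℝ))⁻¹ * x^2))
      = x ^ k * ((gaussianPDF 0 v x).toReal)
    rw [gaussianPDF_def]
    rw [ENNReal.toReal_ofReal (gaussianPDFReal_nonneg 0 v x)]
    simp only [gaussianPDFReal_def]
    rw [show -(x - 0:ℝ)^2/(2*(v:ℝ)) = -(2*(v:ℝ))⁻¹ * x^2 by field_simp; ring]
    ring

lemma gauss_pow_odd (v : ℝ≥0) {k : ℕ} (hk : Odd k) :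
    ∫ x, x ^ k ∂(gaussianReal 0 v) = 0 := by
  have h1 : ((⟨(-1:ℝ)^2, sq_nonneg _⟩ : ℝ≥0)) = (1 : ℝ≥0) := by
    ext; norm_num
  have hmap : (gaussianReal 0 v).map (fun x => -1 * x) = gaussianReal 0 v := by
    have h := gaussianReal_map_const_mul (μ := 0) (v := v) (-1)
    convert h using 2
    · ring
    · ext; simp
  have hInt : ∫ x, x^k ∂(gaussianReal 0 v) = ∫ x, (-1*x)^k ∂(gaussianReal 0 v) := by
    conv_lhs => rw [← hmap]
    exact integral_map (by fun_prop) ((measurable_id.pow_const k).aestronglyMeasurable)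
  simp only [neg_one_mul, Odd.neg_pow hk] at hInt
  rw [MeasureTheory.integral_neg] at hInt
  linarith

lemma gauss_sq (v : ℝ≥0) : ∫ x, x ^ 2 ∂(gaussianReal 0 v) = (v : ℝ) := by
  by_cases hv : v = 0
  · subst hv
    rw [gaussianReal_zero_var, integral_dirac]
    norm_num
  · have hv' : 0 < (v:ℝ) := by positivity
    have hb : 0 < (2*(v:ℝ))⁻¹ := by positivity
    have hsqrtne : Real.sqrt (2*π*(v:ℝ)) ≠ 0 := by
      refine (Real.sqrt_ne_zero' ).mpr ?_
      positivity
    rw [gaussianReal_of_var_ne_zero 0 hv]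
    have hpdf : gaussianPDF 0 v = fun x => ((Real.toNNReal (gaussianPDFReal 0 v x) : ℝ≥0) : ℝ≥0∞) := by
      funext x; rw [gaussianPDF_def]; rfl
    rw [hpdf, integral_withDensity_eq_integral_smul
      ((measurable_gaussianPDFReal 0 v).real_toNNReal) (fun x => x ^ 2)]
    have heq : ∀ x : ℝ, (Real.toNNReal (gaussianPDFReal 0 v x)) • (x ^ 2)
        = (Real.sqrt (2*π*(v:ℝ)))⁻¹ * (x^2 * Real.exp (-(2*(v:ℝ))⁻¹ * x^2)) := by
      intro x
      rw [NNReal.smul_def, Real.coe_toNNReal _ (gaussianPDFReal_nonneg 0 v x)]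
      simp only [gaussianPDFReal_def]
      rw [show -(x - 0:ℝ)^2/(2*(v:ℝ)) = -(2*(v:ℝ))⁻¹ * x^2 by field_simp; ring]
      rw [smul_eq_mul]
      ring
    simp only [heq]
    rw [MeasureTheory.integral_const_mul, integral_sq_mul_gauss hb]
    rw [show (2*(2*(v:ℝ))⁻¹)⁻¹ = (v:ℝ) by field_simp]
    rw [show π / (2*(v:ℝ))⁻¹ = 2*π*(v:ℝ) by field_simp]
    rw [mul_comm (v:ℝ), ← mul_assoc, inv_mul_cancel₀ hsqrtne, one_mul]

end Stmt15Aux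

theorem stmt_15 {Ω : Type} [MeasureSpace Ω] [IsProbabilityMeasure (ℙ : Measure Ω)]
    (n V N p : ℕ) (hn : 1 ≤ n) (hV : 1 ≤ V) (hN : 6 * n < N) (hp : 1 ≤ p)
    (σ : ℝ) (hσ : 0 ≤ σ)
    (F : ℝ → ℤ × ℤ → ℝ) (g : ℤ → ℤ × ℤ → ℂ) (hF : Steerable n V F g)
    (t : Fin p → ℤ × ℤ)
    (ht : ∀ i : Fin p,
      (3 * n : ℤ) ≤ (t i).1 ∧ (t i).1 ≤ (N : ℤ) - 3 * n - 1 ∧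
      (3 * n : ℤ) ≤ (t i).2 ∧ (t i).2 ≤ (N : ℤ) - 3 * n - 1)
    (hsep : ∀ i j : Fin p, i ≠ j →
      (4 * n : ℤ) ≤ max |(t i).1 - (t j).1| |(t i).2 - (t j).2|)
    (θ : Fin p → Ω → ℝ) (ε : ℤ × ℤ → Ω → ℝ)
    (hθmeas : ∀ i : Fin p, Measurable (θ i))
    (hεmeas : ∀ ℓ : ℤ × ℤ, Measurable (ε ℓ))
    (hθdist : ∀ i : Fin p,
      Measure.map (θ i) ℙ =
        (ENNReal.ofReal (2 * π))⁻¹ • (volume.restrict (Set.Ico (0 : ℝ) (2 * π))))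
    (hεdist : ∀ ℓ : ℤ × ℤ, InGrid N ℓ →
      Measure.map (ε ℓ) ℙ = gaussianReal 0 (σ ^ 2).toNNReal)
    (hεzero : ∀ ℓ : ℤ × ℤ, ¬InGrid N ℓ → ε ℓ = 0)
    (hindep : iIndepFun (m := fun _ : Fin p ⊕ (ℤ × ℤ) => (inferInstance : MeasurableSpace ℝ))
      (Sum.elim θ ε) ℙ)
    (M : Ω → ℤ × ℤ → ℝ)
    (hM : ∀ ω : Ω, ∀ ℓ : ℤ × ℤ,
      M ω ℓ = if InGrid N ℓ then (∑ i : Fin p, F (θ i ω) (ℓ - t i)) + ε ℓ ω else 0) :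
    ∀ u v : ℤ × ℤ,
      (0 ≤ u.1 ∧ u.1 ≤ 2 * (n : ℤ) - 1 ∧ 0 ≤ u.2 ∧ u.2 ≤ 2 * (n : ℤ) - 1) →
      (0 ≤ v.1 ∧ v.1 ≤ 2 * (n : ℤ) - 1 ∧ 0 ≤ v.2 ∧ v.2 ≤ 2 * (n : ℤ) - 1) →
      ∫ ω, (1 / (N : ℝ) ^ 2 * ∑' j : ℤ × ℤ, M ω j * M ω (j + u) * M ω (j + v)) ∂ℙ =
        (4 * (p : ℝ) * (n : ℝ) ^ 2 / (N : ℝ) ^ 2) *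
          (1 / (4 * (n : ℝ) ^ 2) *
            (1 / (2 * π) *
              ∫ φ in (0:ℝ)..(2 * π), ∑' ℓ : ℤ × ℤ, F φ ℓ * F φ (ℓ + u) * F φ (ℓ + v))) +
        (4 * (p : ℝ) * (n : ℝ) ^ 2 / (N : ℝ) ^ 2) *
          (1 / (4 * (n : ℝ) ^ 2) *
            (1 / (2 * π) * ∫ φ in (0:ℝ)..(2 * π), ∑' ℓ : ℤ × ℤ, F φ ℓ)) *
          σ ^ 2 *
          ((if u = 0 then 1 else 0) + (if v = 0 then 1 else 0) +
            (if u - v = 0 then 1 else 0)) := by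
  intro u v hu hv
  obtain ⟨hg0, hgF⟩ := hF
  obtain ⟨hu1, hu2, hu3, hu4⟩ := hu
  obtain ⟨hv1, hv2, hv3, hv4⟩ := hv
  have hπ : (0:ℝ) < 2 * π := by positivity
  -- basic facts about F
  have hFsupp : ∀ (φ : ℝ) (ℓ : ℤ × ℤ), (n : ℤ) < max |ℓ.1| |ℓ.2| → F φ ℓ = 0 := by
    intro φ ℓ h
    have h2 := hgF φ ℓ
    rw [Finset.sum_eq_zero (fun ν _ => by rw [hg0 ν ℓ h, zero_mul])] at h2
    exact_mod_cast h2
  have hFcont : ∀ ℓ : ℤ × ℤ, Continuous (fun φ => F φ ℓ) := by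
    intro ℓ
    have hfun : (fun φ => F φ ℓ) = fun φ : ℝ =>
        (∑ ν ∈ Finset.Icc (-(V : ℤ)) (V : ℤ),
          g ν ℓ * Complex.exp (Complex.I * (ν : ℂ) * (φ : ℂ))).re := by
      funext φ
      rw [← hgF φ ℓ, Complex.ofReal_re]
    rw [hfun]
    refine Complex.continuous_re.comp ?_
    refine continuous_finset_sum _ (fun ν _ => continuous_const.mul ?_)
    exact Complex.continuous_exp.comp (continuous_const.mul Complex.continuous_ofReal)
  have hFmeas : ∀ (i : Fin p) (ℓ : ℤ × ℤ), Measurable (fun ω => F (θ i ω) ℓ) :=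
    fun i ℓ => (hFcont ℓ).measurable.comp (hθmeas i)
  have hFbdd : ∀ ℓ : ℤ × ℤ, ∃ C : ℝ, ∀ φ, |F φ ℓ| ≤ C := by
    intro ℓ
    refine ⟨∑ ν ∈ Finset.Icc (-(V : ℤ)) (V : ℤ), ‖g ν ℓ‖, fun φ => ?_⟩
    have h2 : |F φ ℓ| = ‖(F φ ℓ : ℂ)‖ := by
      rw [Complex.norm_real, Real.norm_eq_abs]
    rw [h2, hgF φ ℓ]
    refine (norm_sum_le _ _).trans (Finset.sum_le_sum fun ν _ => ?_)
    rw [norm_mul]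
    have h3 : Complex.I * (ν : ℂ) * (φ : ℂ) = ((ν * φ : ℝ) : ℂ) * Complex.I := by
      push_cast; ring
    rw [h3, show ‖Complex.exp (((↑ν * φ : ℝ) : ℂ) * Complex.I)‖ = 1 from by
      rw [Complex.norm_exp_ofReal_mul_I], mul_one]
  -- grids
  set G : Finset (ℤ × ℤ) := Finset.Icc (0:ℤ) ((N:ℤ)-1) ×ˢ Finset.Icc (0:ℤ) ((N:ℤ)-1) with hGdef
  set B : Finset (ℤ × ℤ) := Finset.Icc (-(n:ℤ)) (n:ℤ) ×ˢ Finset.Icc (-(n:ℤ)) (n:ℤ) with hBdef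
  have hGmem : ∀ ℓ : ℤ × ℤ, ℓ ∈ G ↔ InGrid N ℓ := by
    intro ℓ
    simp only [hGdef, Finset.mem_product, Finset.mem_Icc, InGrid]
    tauto
  have hBmem : ∀ ℓ : ℤ × ℤ, ℓ ∈ B ↔ (|ℓ.1| ≤ (n:ℤ) ∧ |ℓ.2| ≤ (n:ℤ)) := by
    intro ℓ
    simp only [hBdef, Finset.mem_product, Finset.mem_Icc, abs_le]
  have hBzero : ∀ ℓ : ℤ × ℤ, ℓ ∉ B → ∀ φ, F φ ℓ = 0 := by
    intro ℓ hℓ φ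
    have h2 : ¬ (|ℓ.1| ≤ (n:ℤ) ∧ |ℓ.2| ≤ (n:ℤ)) := fun hc => hℓ ((hBmem ℓ).mpr hc)
    rcases not_and_or.mp h2 with h | h
    · exact hFsupp φ ℓ (lt_max_iff.mpr (Or.inl (not_le.mp h)))
    · exact hFsupp φ ℓ (lt_max_iff.mpr (Or.inr (not_le.mp h)))
  have hBG : ∀ ℓ ∈ B, ∀ w : ℤ × ℤ, (n:ℤ) ≤ w.1 → w.1 ≤ (N:ℤ)-1-n → (n:ℤ) ≤ w.2 →
      w.2 ≤ (N:ℤ)-1-n → (ℓ + w ∈ G ∧ InGrid N (ℓ + w)) := by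
    intro ℓ hℓ w e1 e2 e3 e4
    obtain ⟨d1, d2⟩ := (hBmem ℓ).mp hℓ
    rw [abs_le] at d1 d2
    have hIG : InGrid N (ℓ + w) := by
      refine ⟨?_, ?_, ?_, ?_⟩ <;> simp only [Prod.fst_add, Prod.snd_add] <;> omega
    exact ⟨(hGmem _).mpr hIG, hIG⟩
  -- decomposition of M
  have hM' : ∀ (ω : Ω) (ℓ : ℤ × ℤ),
      M ω ℓ = (∑ i : Fin p, F (θ i ω) (ℓ - t i)) + ε ℓ ω := by
    intro ω ℓ
    rw [hM ω ℓ]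
    by_cases h : InGrid N ℓ
    · rw [if_pos h]
    · rw [if_neg h]
      have hz : ∀ i : Fin p, F (θ i ω) (ℓ - t i) = 0 := by
        intro i
        refine hFsupp _ _ ?_
        by_contra hcon
        rw [not_lt] at hcon
        rcases max_le_iff.mp hcon with ⟨c1, c2⟩
        rw [abs_le] at c1 c2
        simp only [Prod.fst_sub, Prod.snd_sub] at c1 c2
        obtain ⟨e1, e2, e3, e4⟩ := ht i
        refine h ⟨?_, ?_, ?_, ?_⟩ <;> omega
      have hε0 : ε ℓ ω = 0 := by rw [hεzero ℓ h]; rfl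
      rw [hε0, Finset.sum_eq_zero (fun i _ => hz i), add_zero]
  -- closeness
  have hclu : ∀ j : ℤ × ℤ, |j.1 - (j+u).1| ≤ 2*(n:ℤ)-1 ∧ |j.2 - (j+u).2| ≤ 2*(n:ℤ)-1 := by
    intro j
    constructor <;> simp only [Prod.fst_add, Prod.snd_add] <;> rw [abs_le] <;> omega
  have hclv : ∀ j : ℤ × ℤ, |j.1 - (j+v).1| ≤ 2*(n:ℤ)-1 ∧ |j.2 - (j+v).2| ≤ 2*(n:ℤ)-1 := by
    intro j
    constructor <;> simp only [Prod.fst_add, Prod.snd_add] <;> rw [abs_le] <;> omega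
  have hcluv : ∀ j : ℤ × ℤ,
      |(j+u).1 - (j+v).1| ≤ 2*(n:ℤ)-1 ∧ |(j+u).2 - (j+v).2| ≤ 2*(n:ℤ)-1 := by
    intro j
    constructor <;> simp only [Prod.fst_add, Prod.snd_add] <;> rw [abs_le] <;> omega
  -- kill lemma
  have hkill : ∀ (x y : ℤ × ℤ), (|x.1 - y.1| ≤ 2*(n:ℤ)-1 ∧ |x.2 - y.2| ≤ 2*(n:ℤ)-1) →
      ∀ (i i' : Fin p), i ≠ i' → ∀ ω : Ω,
      F (θ i ω) (x - t i) * F (θ i' ω) (y - t i') = 0 := by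
    rintro x y ⟨hc1, hc2⟩ i i' hne ω
    by_cases h1 : F (θ i ω) (x - t i) = 0
    · rw [h1, zero_mul]
    by_cases h2 : F (θ i' ω) (y - t i') = 0
    · rw [h2, mul_zero]
    exfalso
    have e1 : max |(x - t i).1| |(x - t i).2| ≤ (n:ℤ) := not_lt.mp (fun h => h1 (hFsupp _ _ h))
    have e2 : max |(y - t i').1| |(y - t i').2| ≤ (n:ℤ) := not_lt.mp (fun h => h2 (hFsupp _ _ h))
    rcases max_le_iff.mp e1 with ⟨a1, a2⟩
    rcases max_le_iff.mp e2 with ⟨b1, b2⟩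
    simp only [Prod.fst_sub, Prod.snd_sub] at a1 a2 b1 b2
    have hs := hsep i i' hne
    have hm : max |(t i).1 - (t i').1| |(t i).2 - (t i').2| ≤ 4*(n:ℤ)-1 := by
      rw [abs_le] at a1 a2 b1 b2 hc1 hc2
      refine max_le ?_ ?_ <;> rw [abs_le] <;> omega
    have h3 := hs.trans hm
    omega
  -- diagonal lemma
  have hdiag : ∀ (a b : Fin p → ℝ), (∀ i i', i ≠ i' → a i * b i' = 0) →
      (∑ i, a i) * (∑ i, b i) = ∑ i, a i * b i := by
    intro a b hab
    rw [Finset.sum_mul_sum]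
    refine Finset.sum_congr rfl fun i _ => ?_
    refine Finset.sum_eq_single i (fun j _ hj => hab i j (Ne.symm hj)) ?_
    exact fun h => absurd (Finset.mem_univ i) h
  have hd2 : ∀ (x y : ℤ × ℤ), (|x.1 - y.1| ≤ 2*(n:ℤ)-1 ∧ |x.2 - y.2| ≤ 2*(n:ℤ)-1) → ∀ ω : Ω,
      (∑ i : Fin p, F (θ i ω) (x - t i)) * (∑ i : Fin p, F (θ i ω) (y - t i))
        = ∑ i : Fin p, F (θ i ω) (x - t i) * F (θ i ω) (y - t i) :=
    fun x y hc ω => hdiag _ _ (fun i i' hne => hkill x y hc i i' hne ω)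
  have hd3 : ∀ (ω : Ω) (j : ℤ × ℤ),
      (∑ i : Fin p, F (θ i ω) (j - t i)) * (∑ i : Fin p, F (θ i ω) (j + u - t i))
        * (∑ i : Fin p, F (θ i ω) (j + v - t i))
      = ∑ i : Fin p, F (θ i ω) (j - t i) * F (θ i ω) (j + u - t i) * F (θ i ω) (j + v - t i) := by
    intro ω j
    rw [hd2 j (j+u) (hclu j) ω]
    refine hdiag _ _ fun i i' hne => ?_
    have hz := hkill j (j+v) (hclv j) i i' hne ω
    calc F (θ i ω) (j - t i) * F (θ i ω) (j + u - t i) * F (θ i' ω) (j + v - t i')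
        = F (θ i ω) (j + u - t i) * (F (θ i ω) (j - t i) * F (θ i' ω) (j + v - t i')) := by ring
      _ = 0 := by rw [hz, mul_zero]
  -- pointwise expansion
  have hptw : ∀ (ω : Ω) (j : ℤ × ℤ),
      M ω j * M ω (j+u) * M ω (j+v)
      = (∑ i : Fin p, F (θ i ω) (j - t i) * F (θ i ω) (j + u - t i) * F (θ i ω) (j + v - t i))
      + ((∑ i : Fin p, F (θ i ω) (j - t i) * F (θ i ω) (j + u - t i) * ε (j+v) ω)
      + (∑ i : Fin p, F (θ i ω) (j - t i) * F (θ i ω) (j + v - t i) * ε (j+u) ω)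
      + (∑ i : Fin p, F (θ i ω) (j + u - t i) * F (θ i ω) (j + v - t i) * ε j ω))
      + ((∑ i : Fin p, F (θ i ω) (j - t i) * (ε (j+u) ω * ε (j+v) ω))
      + (∑ i : Fin p, F (θ i ω) (j + u - t i) * (ε j ω * ε (j+v) ω))
      + (∑ i : Fin p, F (θ i ω) (j + v - t i) * (ε j ω * ε (j+u) ω)))
      + ε j ω * ε (j+u) ω * ε (j+v) ω := by
    intro ω j
    rw [hM' ω j, hM' ω (j+u), hM' ω (j+v)]
    have e2a := hd2 j (j+u) (hclu j) ω
    have e2b := hd2 j (j+v) (hclv j) ω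
    have e2c := hd2 (j+u) (j+v) (hcluv j) ω
    have e3 := hd3 ω j
    set sa := ∑ i : Fin p, F (θ i ω) (j - t i) with hsa
    set sb := ∑ i : Fin p, F (θ i ω) (j + u - t i) with hsb
    set sc := ∑ i : Fin p, F (θ i ω) (j + v - t i) with hsc
    calc (sa + ε j ω) * (sb + ε (j+u) ω) * (sc + ε (j+v) ω)
        = sa * sb * sc + ((sa * sb) * ε (j+v) ω + (sa * sc) * ε (j+u) ω + (sb * sc) * ε j ω)
          + (sa * (ε (j+u) ω * ε (j+v) ω) + sb * (ε j ω * ε (j+v) ω) + sc * (ε j ω * ε (j+u) ω))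
          + ε j ω * ε (j+u) ω * ε (j+v) ω := by ring
      _ = _ := by
          rw [e3, e2a, e2b, e2c, hsa, hsb, hsc]
          simp only [Finset.sum_mul]
  -- independence helpers
  have hXmeas : ∀ x : Fin p ⊕ (ℤ × ℤ), Measurable (Sum.elim θ ε x) := by
    rintro (i | a)
    · exact hθmeas i
    · exact hεmeas a
  have hpairind : ∀ (a b : ℤ × ℤ) (k : Fin p ⊕ (ℤ × ℤ)), Sum.inr a ≠ k → Sum.inr b ≠ k →
      IndepFun (fun ω => (ε a ω, ε b ω)) (Sum.elim θ ε k) ℙ := by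
    intro a b k h1 h2
    exact hindep.indepFun_prodMk hXmeas (Sum.inr a) (Sum.inr b) k h1 h2
  have hind_fθ_ε : ∀ (i : Fin p) (f : ℝ → ℝ), Measurable f → ∀ (a : ℤ × ℤ),
      IndepFun (fun ω => f (θ i ω)) (ε a) ℙ := by
    intro i f hf a
    have h := hindep.indepFun (show (Sum.inl i : Fin p ⊕ (ℤ × ℤ)) ≠ Sum.inr a by simp)
    exact h.comp hf measurable_id
  have hind_fθ_εε : ∀ (i : Fin p) (f : ℝ → ℝ), Measurable f → ∀ (a b : ℤ × ℤ),
      IndepFun (fun ω => f (θ i ω)) (fun ω => ε a ω * ε b ω) ℙ := by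
    intro i f hf a b
    have h := (hpairind a b (Sum.inl i) (by simp) (by simp)).symm
    exact h.comp hf (measurable_fst.mul measurable_snd)
  have hind_εε_ε : ∀ (a b c : ℤ × ℤ), c ≠ a → c ≠ b →
      IndepFun (fun ω => ε a ω * ε b ω) (ε c) ℙ := by
    intro a b c h1 h2
    have k1 : (Sum.inr a : Fin p ⊕ (ℤ × ℤ)) ≠ Sum.inr c := fun hcon => h1 (Sum.inr.inj hcon).symm
    have k2 : (Sum.inr b : Fin p ⊕ (ℤ × ℤ)) ≠ Sum.inr c := fun hcon => h2 (Sum.inr.inj hcon).symm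
    have h := hpairind a b (Sum.inr c) k1 k2
    exact h.comp (measurable_fst.mul measurable_snd) measurable_id
  -- ε moments
  have hεpow : ∀ (a : ℤ × ℤ) (k : ℕ), Integrable (fun ω => ε a ω ^ k) ℙ := by
    intro a k
    by_cases hg : InGrid N a
    · have h1 : Integrable (fun x : ℝ => x ^ k) (Measure.map (ε a) ℙ) := by
        rw [hεdist a hg]; exact Stmt15Aux.gauss_pow_integrable _ k
      exact (integrable_map_measure (measurable_id.pow_const k).aestronglyMeasurable
        (hεmeas a).aemeasurable).mp h1
    · have hh : (fun ω => ε a ω ^ k) = fun _ => (0:ℝ) ^ k := by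
        funext ω; rw [hεzero a hg]; rfl
      rw [hh]; exact integrable_const _
  have hεint1 : ∀ a, Integrable (ε a) ℙ := by
    intro a; have h := hεpow a 1; simpa using h
  have hεmean : ∀ a, ∫ ω, ε a ω ∂ℙ = 0 := by
    intro a
    by_cases hg : InGrid N a
    · calc ∫ ω, ε a ω ∂ℙ = ∫ x, x ∂(Measure.map (ε a) ℙ) :=
            (integral_map (hεmeas a).aemeasurable aestronglyMeasurable_id).symm
        _ = 0 := by
            rw [hεdist a hg]
            simpa using Stmt15Aux.gauss_pow_odd ((σ^2).toNNReal) odd_one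
    · rw [show ε a = 0 from hεzero a hg]; simp
  have hεsq : ∀ a, InGrid N a → ∫ ω, ε a ω * ε a ω ∂ℙ = σ^2 := by
    intro a hg
    calc ∫ ω, ε a ω * ε a ω ∂ℙ = ∫ ω, (ε a ω) ^ 2 ∂ℙ :=
          integral_congr_ae (ae_of_all _ fun ω => (pow_two (ε a ω)).symm)
      _ = ∫ x, x ^ 2 ∂(Measure.map (ε a) ℙ) :=
          (integral_map (hεmeas a).aemeasurable
            ((measurable_id.pow_const 2).aestronglyMeasurable)).symm
      _ = σ^2 := by
          rw [hεdist a hg, Stmt15Aux.gauss_sq]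
          exact Real.coe_toNNReal _ (sq_nonneg σ)
  have hεcube : ∀ a, ∫ ω, ε a ω * ε a ω * ε a ω ∂ℙ = 0 := by
    intro a
    by_cases hg : InGrid N a
    · calc ∫ ω, ε a ω * ε a ω * ε a ω ∂ℙ = ∫ ω, (ε a ω) ^ 3 ∂ℙ :=
            integral_congr_ae (ae_of_all _ fun ω =>
              (by ring : ε a ω * ε a ω * ε a ω = ε a ω ^ 3))
        _ = ∫ x, x ^ 3 ∂(Measure.map (ε a) ℙ) :=
            (integral_map (hεmeas a).aemeasurable
              ((measurable_id.pow_const 3).aestronglyMeasurable)).symm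
        _ = 0 := by
            rw [hεdist a hg]
            exact Stmt15Aux.gauss_pow_odd ((σ^2).toNNReal) ⟨1, by norm_num⟩
    · rw [show ε a = 0 from hεzero a hg]; simp
  have hεεexp : ∀ a b : ℤ × ℤ, ∫ ω, ε a ω * ε b ω ∂ℙ = if a = b ∧ InGrid N a then σ^2 else 0 := by
    intro a b
    by_cases hab : a = b
    · subst hab
      by_cases hg : InGrid N a
      · rw [if_pos ⟨rfl, hg⟩]; exact hεsq a hg
      · rw [if_neg (fun hc => hg hc.2), show ε a = 0 from hεzero a hg]; simp
    · rw [if_neg (fun hc => hab hc.1)]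
      have h := (hindep.indepFun (show (Sum.inr a : Fin p ⊕ (ℤ × ℤ)) ≠ Sum.inr b from
        fun hc => hab (Sum.inr.inj hc))).integral_fun_mul_eq_mul_integral (hεint1 a).1 (hεint1 b).1
      calc ∫ ω, ε a ω * ε b ω ∂ℙ = (∫ ω, ε a ω ∂ℙ) * ∫ ω, ε b ω ∂ℙ := h
        _ = 0 := by rw [hεmean a, zero_mul]
  have hεεint : ∀ a b : ℤ × ℤ, Integrable (fun ω => ε a ω * ε b ω) ℙ := by
    intro a b
    by_cases hab : a = b
    · subst hab
      exact (hεpow a 2).congr (ae_of_all _ fun ω => pow_two (ε a ω))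
    · exact (hindep.indepFun (show (Sum.inr a : Fin p ⊕ (ℤ × ℤ)) ≠ Sum.inr b from
        fun hc => hab (Sum.inr.inj hc))).integrable_mul (hεint1 a) (hεint1 b)
  have hεεεint : ∀ a b c : ℤ × ℤ, Integrable (fun ω => ε a ω * ε b ω * ε c ω) ℙ := by
    have key : ∀ a b c : ℤ × ℤ, c ≠ a → c ≠ b →
        Integrable (fun ω => ε a ω * ε b ω * ε c ω) ℙ := by
      intro a b c h1 h2
      exact (hind_εε_ε a b c h1 h2).integrable_mul (hεεint a b) (hεint1 c)
    intro a b c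
    by_cases h1 : c = a
    · subst h1
      by_cases h2 : c = b
      · subst h2
        exact (hεpow c 3).congr (ae_of_all _ fun ω =>
          (by ring : ε c ω ^ 3 = ε c ω * ε c ω * ε c ω))
      · exact (key c c b (Ne.symm h2) (Ne.symm h2)).congr (ae_of_all _ fun ω =>
          (by ring : ε c ω * ε c ω * ε b ω = ε c ω * ε b ω * ε c ω))
    · by_cases h2 : c = b
      · subst h2
        exact (key c c a (Ne.symm h1) (Ne.symm h1)).congr (ae_of_all _ fun ω =>
          (by ring : ε c ω * ε c ω * ε a ω = ε a ω * ε c ω * ε c ω))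
      · exact key a b c h1 h2
  have hεεε0 : ∀ a b c : ℤ × ℤ, ∫ ω, ε a ω * ε b ω * ε c ω ∂ℙ = 0 := by
    have key : ∀ a b c : ℤ × ℤ, c ≠ a → c ≠ b →
        ∫ ω, ε a ω * ε b ω * ε c ω ∂ℙ = 0 := by
      intro a b c h1 h2
      have h := (hind_εε_ε a b c h1 h2).integral_fun_mul_eq_mul_integral
        ((hεmeas a).mul (hεmeas b)).aestronglyMeasurable (hεmeas c).aestronglyMeasurable
      calc ∫ ω, ε a ω * ε b ω * ε c ω ∂ℙ
          = (∫ ω, ε a ω * ε b ω ∂ℙ) * ∫ ω, ε c ω ∂ℙ := h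
        _ = 0 := by rw [hεmean c, mul_zero]
    intro a b c
    by_cases h1 : c = a
    · subst h1
      by_cases h2 : c = b
      · subst h2; exact hεcube c
      · rw [show (fun ω => ε c ω * ε b ω * ε c ω) = fun ω => ε c ω * ε c ω * ε b ω from
          funext fun ω => by ring]
        exact key c c b (Ne.symm h2) (Ne.symm h2)
    · by_cases h2 : c = b
      · subst h2
        rw [show (fun ω => ε a ω * ε c ω * ε c ω) = fun ω => ε c ω * ε c ω * ε a ω from
          funext fun ω => by ring]
        exact key c c a (Ne.symm h1) (Ne.symm h1)
      · exact key a b c h1 h2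
  -- expectation over θ
  have hEθ : ∀ (i : Fin p) (f : ℝ → ℝ), Continuous f →
      ∫ ω, f (θ i ω) ∂ℙ = (2*π)⁻¹ * ∫ φ in (0:ℝ)..(2*π), f φ := by
    intro i f hf
    have h1 : ∫ ω, f (θ i ω) ∂ℙ = ∫ x, f x ∂(Measure.map (θ i) ℙ) :=
      (integral_map (hθmeas i).aemeasurable hf.aestronglyMeasurable).symm
    rw [h1, hθdist i, MeasureTheory.integral_smul_measure, MeasureTheory.integral_Ico_eq_integral_Ioo,
      ← MeasureTheory.integral_Ioc_eq_integral_Ioo, ← intervalIntegral.integral_of_le hπ.le, ENNReal.toReal_inv,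
      ENNReal.toReal_ofReal hπ.le, smul_eq_mul]
  -- integrability of blocks
  have hbint : ∀ (f : Ω → ℝ), Measurable f → (∃ C, ∀ ω, |f ω| ≤ C) → Integrable f ℙ := by
    rintro f hf ⟨C, hC⟩
    refine (integrable_const C).mono' hf.aestronglyMeasurable (ae_of_all _ fun ω => ?_)
    rw [Real.norm_eq_abs]; exact hC ω
  have hintAAA : ∀ (i : Fin p) (x y z : ℤ × ℤ),
      Integrable (fun ω => F (θ i ω) x * F (θ i ω) y * F (θ i ω) z) ℙ := by
    intro i x y z
    refine hbint _ (((hFmeas i x).mul (hFmeas i y)).mul (hFmeas i z)) ?_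
    obtain ⟨C1, h1⟩ := hFbdd x
    obtain ⟨C2, h2⟩ := hFbdd y
    obtain ⟨C3, h3⟩ := hFbdd z
    refine ⟨C1*C2*C3, fun ω => ?_⟩
    have n1 : (0:ℝ) ≤ C1 := (abs_nonneg _).trans (h1 (θ i ω))
    have n2 : (0:ℝ) ≤ C2 := (abs_nonneg _).trans (h2 (θ i ω))
    rw [abs_mul, abs_mul]
    exact mul_le_mul (mul_le_mul (h1 _) (h2 _) (abs_nonneg _) n1) (h3 _) (abs_nonneg _)
      (mul_nonneg n1 n2)
  have hintAAe : ∀ (i : Fin p) (x y c : ℤ × ℤ),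
      Integrable (fun ω => F (θ i ω) x * F (θ i ω) y * ε c ω) ℙ := by
    intro i x y c
    suffices hb : ∃ C, ∀ ω, ‖F (θ i ω) x * F (θ i ω) y‖ ≤ C by
      obtain ⟨C, hC⟩ := hb
      exact Integrable.bdd_mul (c := C) (hεint1 c)
        ((hFmeas i x).mul (hFmeas i y)).aestronglyMeasurable (ae_of_all _ hC)
    obtain ⟨C1, h1⟩ := hFbdd x
    obtain ⟨C2, h2⟩ := hFbdd y
    refine ⟨C1*C2, fun ω => ?_⟩
    rw [Real.norm_eq_abs, abs_mul]
    exact mul_le_mul (h1 _) (h2 _) (abs_nonneg _) ((abs_nonneg _).trans (h1 (θ i ω)))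
  have hintAe : ∀ (i : Fin p) (x a b : ℤ × ℤ),
      Integrable (fun ω => F (θ i ω) x * (ε a ω * ε b ω)) ℙ := by
    intro i x a b
    suffices hb : ∃ C, ∀ ω, ‖F (θ i ω) x‖ ≤ C by
      obtain ⟨C, hC⟩ := hb
      exact Integrable.bdd_mul (c := C) (hεεint a b) (hFmeas i x).aestronglyMeasurable
        (ae_of_all _ hC)
    obtain ⟨C, hC⟩ := hFbdd x
    exact ⟨C, fun ω => by rw [Real.norm_eq_abs]; exact hC _⟩
  -- integrable families
  have i1 : ∀ j : ℤ × ℤ, Integrable (fun ω => ∑ i : Fin p,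
      F (θ i ω) (j - t i) * F (θ i ω) (j + u - t i) * F (θ i ω) (j + v - t i)) ℙ :=
    fun j => integrable_finset_sum _ (fun i _ => hintAAA i _ _ _)
  have i2a : ∀ j : ℤ × ℤ, Integrable (fun ω => ∑ i : Fin p,
      F (θ i ω) (j - t i) * F (θ i ω) (j + u - t i) * ε (j+v) ω) ℙ :=
    fun j => integrable_finset_sum _ (fun i _ => hintAAe i _ _ _)
  have i2b : ∀ j : ℤ × ℤ, Integrable (fun ω => ∑ i : Fin p,
      F (θ i ω) (j - t i) * F (θ i ω) (j + v - t i) * ε (j+u) ω) ℙ :=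
    fun j => integrable_finset_sum _ (fun i _ => hintAAe i _ _ _)
  have i2c : ∀ j : ℤ × ℤ, Integrable (fun ω => ∑ i : Fin p,
      F (θ i ω) (j + u - t i) * F (θ i ω) (j + v - t i) * ε j ω) ℙ :=
    fun j => integrable_finset_sum _ (fun i _ => hintAAe i _ _ _)
  have i5a : ∀ j : ℤ × ℤ, Integrable (fun ω => ∑ i : Fin p,
      F (θ i ω) (j - t i) * (ε (j+u) ω * ε (j+v) ω)) ℙ :=
    fun j => integrable_finset_sum _ (fun i _ => hintAe i _ _ _)
  have i5b : ∀ j : ℤ × ℤ, Integrable (fun ω => ∑ i : Fin p,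
      F (θ i ω) (j + u - t i) * (ε j ω * ε (j+v) ω)) ℙ :=
    fun j => integrable_finset_sum _ (fun i _ => hintAe i _ _ _)
  have i5c : ∀ j : ℤ × ℤ, Integrable (fun ω => ∑ i : Fin p,
      F (θ i ω) (j + v - t i) * (ε j ω * ε (j+u) ω)) ℙ :=
    fun j => integrable_finset_sum _ (fun i _ => hintAe i _ _ _)
  have i8 : ∀ j : ℤ × ℤ, Integrable (fun ω => ε j ω * ε (j+u) ω * ε (j+v) ω) ℙ :=
    fun j => hεεεint j (j+u) (j+v)
  have hMint : ∀ j : ℤ × ℤ, Integrable (fun ω => M ω j * M ω (j+u) * M ω (j+v)) ℙ := by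
    intro j
    have hbig := (((i1 j).add (((i2a j).add (i2b j)).add (i2c j))).add
      (((i5a j).add (i5b j)).add (i5c j))).add (i8 j)
    exact hbig.congr (ae_of_all _ fun ω => (hptw ω j).symm)
  -- reindexing
  have hreindex : ∀ (w : ℤ × ℤ) (h : ℤ × ℤ → ℝ), (∀ ℓ, ℓ ∉ B → h ℓ = 0) →
      (∀ ℓ ∈ B, ℓ + w ∈ G) → ∑ j ∈ G, h (j - w) = ∑ ℓ ∈ B, h ℓ := by
    intro w h h0 hBw
    have himg : ∑ ℓ ∈ B, h ℓ = ∑ j ∈ B.image (· + w), h (j - w) := by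
      rw [Finset.sum_image (fun x _ y _ e => add_left_injective w e)]
      exact Finset.sum_congr rfl fun ℓ _ => by rw [show ℓ + w - w = ℓ from by ring]
    rw [himg]
    refine (Finset.sum_subset (fun j hj => ?_) (fun j hjG hjimg => ?_)).symm
    · obtain ⟨ℓ, hℓ, rfl⟩ := Finset.mem_image.mp hj
      exact hBw ℓ hℓ
    · by_contra hne
      have hmem : j - w ∈ B := by
        by_contra hmem
        exact hne (h0 _ hmem)
      exact hjimg (Finset.mem_image.mpr ⟨j - w, hmem, by rw [show j - w + w = j from by ring]⟩)
  have hsupp3 : ∀ ℓ : ℤ × ℤ, ℓ ∉ B →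
      (2*π)⁻¹ * (∫ φ in (0:ℝ)..(2*π), F φ ℓ * F φ (ℓ + u) * F φ (ℓ + v)) = 0 := by
    intro ℓ hℓ
    have hzz := hBzero ℓ hℓ
    simp only [hzz, zero_mul]
    simp
  have hsupp1 : ∀ ℓ : ℤ × ℤ, ℓ ∉ B → (2*π)⁻¹ * (∫ φ in (0:ℝ)..(2*π), F φ ℓ) = 0 := by
    intro ℓ hℓ
    have hzz := hBzero ℓ hℓ
    simp only [hzz]
    simp
  -- per-j expectation
  have hI : ∀ j ∈ G, (∫ ω, M ω j * M ω (j+u) * M ω (j+v) ∂ℙ)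
      = (∑ i : Fin p, (2*π)⁻¹ * ∫ φ in (0:ℝ)..(2*π),
          F φ (j - t i) * F φ (j - t i + u) * F φ (j - t i + v))
      + ((if u = v then σ^2 else 0) * ∑ i : Fin p, (2*π)⁻¹ * ∫ φ in (0:ℝ)..(2*π), F φ (j - t i))
      + ((if v = 0 then σ^2 else 0) * ∑ i : Fin p, (2*π)⁻¹ * ∫ φ in (0:ℝ)..(2*π), F φ (j - (t i - u)))
      + ((if u = 0 then σ^2 else 0) * ∑ i : Fin p, (2*π)⁻¹ * ∫ φ in (0:ℝ)..(2*π), F φ (j - (t i - v))) := by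
    intro j hjG
    have hjIG : InGrid N j := (hGmem j).mp hjG
    have e1 : ∫ ω, (∑ i : Fin p,
        F (θ i ω) (j - t i) * F (θ i ω) (j + u - t i) * F (θ i ω) (j + v - t i)) ∂ℙ
        = ∑ i : Fin p, (2*π)⁻¹ * ∫ φ in (0:ℝ)..(2*π),
            F φ (j - t i) * F φ (j - t i + u) * F φ (j - t i + v) := by
      rw [integral_finset_sum _ (fun i _ => hintAAA i _ _ _)]
      refine Finset.sum_congr rfl fun i _ => ?_
      have h := hEθ i (fun φ => F φ (j - t i) * F φ (j + u - t i) * F φ (j + v - t i))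
        (((hFcont _).mul (hFcont _)).mul (hFcont _))
      simp only [show j + u - t i = j - t i + u from by ring,
        show j + v - t i = j - t i + v from by ring] at h ⊢
      exact h
    have e2 : ∀ (x y c : ℤ × ℤ),
        (∫ ω, (∑ i : Fin p, F (θ i ω) (x - t i) * F (θ i ω) (y - t i) * ε c ω) ∂ℙ) = 0 := by
      intro x y c
      rw [integral_finset_sum _ (fun i _ => hintAAe i _ _ _)]
      refine Finset.sum_eq_zero fun i _ => ?_
      have h := (hind_fθ_ε i (fun φ => F φ (x - t i) * F φ (y - t i))
        ((hFcont _).mul (hFcont _)).measurable c).integral_fun_mul_eq_mul_integral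
        ((hFmeas i _).mul (hFmeas i _)).aestronglyMeasurable (hεmeas c).aestronglyMeasurable
      calc ∫ ω, F (θ i ω) (x - t i) * F (θ i ω) (y - t i) * ε c ω ∂ℙ
          = (∫ ω, F (θ i ω) (x - t i) * F (θ i ω) (y - t i) ∂ℙ) * ∫ ω, ε c ω ∂ℙ := h
        _ = 0 := by rw [hεmean c, mul_zero]
    have e5 : ∀ (x a b : ℤ × ℤ),
        (∫ ω, (∑ i : Fin p, F (θ i ω) (x - t i) * (ε a ω * ε b ω)) ∂ℙ)
        = (∑ i : Fin p, (2*π)⁻¹ * ∫ φ in (0:ℝ)..(2*π), F φ (x - t i))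
            * (if a = b ∧ InGrid N a then σ^2 else 0) := by
      intro x a b
      rw [integral_finset_sum _ (fun i _ => hintAe i _ _ _), Finset.sum_mul]
      refine Finset.sum_congr rfl fun i _ => ?_
      have h := (hind_fθ_εε i (fun φ => F φ (x - t i)) (hFcont _).measurable a b).integral_fun_mul_eq_mul_integral
        (hFmeas i _).aestronglyMeasurable ((hεmeas a).mul (hεmeas b)).aestronglyMeasurable
      calc ∫ ω, F (θ i ω) (x - t i) * (ε a ω * ε b ω) ∂ℙ
          = (∫ ω, F (θ i ω) (x - t i) ∂ℙ) * ∫ ω, ε a ω * ε b ω ∂ℙ := h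
        _ = (∫ ω, F (θ i ω) (x - t i) ∂ℙ) * (if a = b ∧ InGrid N a then σ^2 else 0) := by
            rw [hεεexp a b]
        _ = ((2*π)⁻¹ * ∫ φ in (0:ℝ)..(2*π), F φ (x - t i))
              * (if a = b ∧ InGrid N a then σ^2 else 0) :=
            congrArg (fun z => z * (if a = b ∧ InGrid N a then σ^2 else 0))
              (hEθ i (fun φ => F φ (x - t i)) (hFcont _))
    have e8 := hεεε0 j (j+u) (j+v)
    rw [integral_congr_ae (ae_of_all _ fun ω => hptw ω j)]
    have Ic : Integrable (fun ω => (∑ i : Fin p, F (θ i ω) (j - t i) * F (θ i ω) (j + u - t i) * ε (j+v) ω) + (∑ i : Fin p, F (θ i ω) (j - t i) * F (θ i ω) (j + v - t i) * ε (j+u) ω)) ℙ := (i2a j).add (i2b j)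
    have Id : Integrable (fun ω => (∑ i : Fin p, F (θ i ω) (j - t i) * F (θ i ω) (j + u - t i) * ε (j+v) ω) + (∑ i : Fin p, F (θ i ω) (j - t i) * F (θ i ω) (j + v - t i) * ε (j+u) ω) + (∑ i : Fin p, F (θ i ω) (j + u - t i) * F (θ i ω) (j + v - t i) * ε j ω)) ℙ := Ic.add (i2c j)
    have Ie : Integrable (fun ω => (∑ i : Fin p, F (θ i ω) (j - t i) * (ε (j+u) ω * ε (j+v) ω)) + (∑ i : Fin p, F (θ i ω) (j + u - t i) * (ε j ω * ε (j+v) ω))) ℙ := (i5a j).add (i5b j)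
    have If : Integrable (fun ω => (∑ i : Fin p, F (θ i ω) (j - t i) * (ε (j+u) ω * ε (j+v) ω)) + (∑ i : Fin p, F (θ i ω) (j + u - t i) * (ε j ω * ε (j+v) ω)) + (∑ i : Fin p, F (θ i ω) (j + v - t i) * (ε j ω * ε (j+u) ω))) ℙ := Ie.add (i5c j)
    have Ib : Integrable (fun ω => (∑ i : Fin p, F (θ i ω) (j - t i) * F (θ i ω) (j + u - t i) * F (θ i ω) (j + v - t i)) + ((∑ i : Fin p, F (θ i ω) (j - t i) * F (θ i ω) (j + u - t i) * ε (j+v) ω) + (∑ i : Fin p, F (θ i ω) (j - t i) * F (θ i ω) (j + v - t i) * ε (j+u) ω) + (∑ i : Fin p, F (θ i ω) (j + u - t i) * F (θ i ω) (j + v - t i) * ε j ω))) ℙ := (i1 j).add Id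
    have Ia : Integrable (fun ω => (∑ i : Fin p, F (θ i ω) (j - t i) * F (θ i ω) (j + u - t i) * F (θ i ω) (j + v - t i)) + ((∑ i : Fin p, F (θ i ω) (j - t i) * F (θ i ω) (j + u - t i) * ε (j+v) ω) + (∑ i : Fin p, F (θ i ω) (j - t i) * F (θ i ω) (j + v - t i) * ε (j+u) ω) + (∑ i : Fin p, F (θ i ω) (j + u - t i) * F (θ i ω) (j + v - t i) * ε j ω))
        + ((∑ i : Fin p, F (θ i ω) (j - t i) * (ε (j+u) ω * ε (j+v) ω)) + (∑ i : Fin p, F (θ i ω) (j + u - t i) * (ε j ω * ε (j+v) ω)) + (∑ i : Fin p, F (θ i ω) (j + v - t i) * (ε j ω * ε (j+u) ω)))) ℙ := Ib.add If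
    rw [integral_add Ia (i8 j), integral_add Ib If, integral_add (i1 j) Id,
      integral_add Ic (i2c j), integral_add (i2a j) (i2b j),
      integral_add Ie (i5c j), integral_add (i5a j) (i5b j)]
    rw [e1, e2 j (j+u) (j+v), e2 j (j+v) (j+u), e2 (j+u) (j+v) j,
      e5 j (j+u) (j+v), e5 (j+u) j (j+v), e5 (j+v) j (j+u), e8]
    have hargu : ∀ w : ℤ × ℤ, j + u - w = j - (w - u) := fun w => by ring
    have hargv : ∀ w : ℤ × ℤ, j + v - w = j - (w - v) := fun w => by ring
    simp only [hargu, hargv]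
    have hterma : (∑ i : Fin p, (2*π)⁻¹ * ∫ φ in (0:ℝ)..(2*π), F φ (j - t i))
        * (if j + u = j + v ∧ InGrid N (j+u) then σ^2 else 0)
        = (if u = v then σ^2 else 0)
            * ∑ i : Fin p, (2*π)⁻¹ * ∫ φ in (0:ℝ)..(2*π), F φ (j - t i) := by
      by_cases huv : u = v
      · by_cases hg : InGrid N (j+u)
        · rw [if_pos ⟨by rw [huv], hg⟩, if_pos huv, mul_comm]
        · rw [if_neg (fun hc => hg hc.2), if_pos huv, mul_zero]
          have hz : ∀ i : Fin p, (2*π)⁻¹ * ∫ φ in (0:ℝ)..(2*π), F φ (j - t i) = (0:ℝ) := by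
            intro i
            by_cases hmem : j - t i ∈ B
            · exfalso
              obtain ⟨e1', e2', e3', e4'⟩ := ht i
              have hig := (hBG (j - t i) hmem (t i + u)
                (by simp only [Prod.fst_add]; omega)
                (by simp only [Prod.fst_add]; omega)
                (by simp only [Prod.snd_add]; omega)
                (by simp only [Prod.snd_add]; omega)).2
              rw [show j - t i + (t i + u) = j + u from by ring] at hig
              exact hg hig
            · have hzz := hBzero _ hmem
              simp only [hzz]
              simp
          rw [Finset.sum_eq_zero (fun i _ => hz i), mul_zero]
      · rw [if_neg (fun hc => huv (add_left_cancel hc.1)), if_neg huv, mul_zero, zero_mul]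
    have htermb : (∑ i : Fin p, (2*π)⁻¹ * ∫ φ in (0:ℝ)..(2*π), F φ (j - (t i - u)))
        * (if j = j + v ∧ InGrid N j then σ^2 else 0)
        = (if v = 0 then σ^2 else 0)
            * ∑ i : Fin p, (2*π)⁻¹ * ∫ φ in (0:ℝ)..(2*π), F φ (j - (t i - u)) := by
      by_cases hv0 : v = 0
      · rw [if_pos ⟨by rw [hv0, add_zero], hjIG⟩, if_pos hv0, mul_comm]
      · rw [if_neg (fun hc => hv0 (left_eq_add.mp hc.1)), if_neg hv0, mul_zero, zero_mul]
    have htermc : (∑ i : Fin p, (2*π)⁻¹ * ∫ φ in (0:ℝ)..(2*π), F φ (j - (t i - v)))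
        * (if j = j + u ∧ InGrid N j then σ^2 else 0)
        = (if u = 0 then σ^2 else 0)
            * ∑ i : Fin p, (2*π)⁻¹ * ∫ φ in (0:ℝ)..(2*π), F φ (j - (t i - v)) := by
      by_cases hu0 : u = 0
      · rw [if_pos ⟨by rw [hu0, add_zero], hjIG⟩, if_pos hu0, mul_comm]
      · rw [if_neg (fun hc => hu0 (left_eq_add.mp hc.1)), if_neg hu0, mul_zero, zero_mul]
    rw [hterma, htermb, htermc]
    ring
  -- summation lemmas
  have hgrid1 : ∀ (i : Fin p), ∀ ℓ ∈ B, ℓ + t i ∈ G := by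
    intro i ℓ hℓ
    obtain ⟨e1, e2, e3, e4⟩ := ht i
    exact (hBG ℓ hℓ (t i) (by omega) (by omega) (by omega) (by omega)).1
  have hgridu : ∀ (i : Fin p), ∀ ℓ ∈ B, ℓ + (t i - u) ∈ G := by
    intro i ℓ hℓ
    obtain ⟨e1, e2, e3, e4⟩ := ht i
    exact (hBG ℓ hℓ (t i - u) (by simp only [Prod.fst_sub]; omega)
      (by simp only [Prod.fst_sub]; omega) (by simp only [Prod.snd_sub]; omega)
      (by simp only [Prod.snd_sub]; omega)).1
  have hgridv : ∀ (i : Fin p), ∀ ℓ ∈ B, ℓ + (t i - v) ∈ G := by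
    intro i ℓ hℓ
    obtain ⟨e1, e2, e3, e4⟩ := ht i
    exact (hBG ℓ hℓ (t i - v) (by simp only [Prod.fst_sub]; omega)
      (by simp only [Prod.fst_sub]; omega) (by simp only [Prod.snd_sub]; omega)
      (by simp only [Prod.snd_sub]; omega)).1
  have hsum3 : (∑ j ∈ G, ∑ i : Fin p, (2*π)⁻¹ * ∫ φ in (0:ℝ)..(2*π),
        F φ (j - t i) * F φ (j - t i + u) * F φ (j - t i + v))
      = (p:ℝ) * ∑ ℓ ∈ B, (2*π)⁻¹ * ∫ φ in (0:ℝ)..(2*π), F φ ℓ * F φ (ℓ + u) * F φ (ℓ + v) := by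
    rw [Finset.sum_comm]
    calc ∑ i : Fin p, ∑ j ∈ G, (2*π)⁻¹ * ∫ φ in (0:ℝ)..(2*π),
          F φ (j - t i) * F φ (j - t i + u) * F φ (j - t i + v)
        = ∑ _i : Fin p, ∑ ℓ ∈ B, (2*π)⁻¹ * ∫ φ in (0:ℝ)..(2*π),
            F φ ℓ * F φ (ℓ + u) * F φ (ℓ + v) := by
          refine Finset.sum_congr rfl fun i _ => ?_
          exact hreindex (t i)
            (fun ℓ => (2*π)⁻¹ * ∫ φ in (0:ℝ)..(2*π), F φ ℓ * F φ (ℓ + u) * F φ (ℓ + v))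
            hsupp3 (hgrid1 i)
      _ = (p:ℝ) * ∑ ℓ ∈ B, (2*π)⁻¹ * ∫ φ in (0:ℝ)..(2*π), F φ ℓ * F φ (ℓ + u) * F φ (ℓ + v) := by
          rw [Finset.sum_const, Finset.card_univ, Fintype.card_fin, nsmul_eq_mul]
  have hsum1a : (∑ j ∈ G, ∑ i : Fin p, (2*π)⁻¹ * ∫ φ in (0:ℝ)..(2*π), F φ (j - t i))
      = (p:ℝ) * ∑ ℓ ∈ B, (2*π)⁻¹ * ∫ φ in (0:ℝ)..(2*π), F φ ℓ := by
    rw [Finset.sum_comm]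
    calc ∑ i : Fin p, ∑ j ∈ G, (2*π)⁻¹ * ∫ φ in (0:ℝ)..(2*π), F φ (j - t i)
        = ∑ _i : Fin p, ∑ ℓ ∈ B, (2*π)⁻¹ * ∫ φ in (0:ℝ)..(2*π), F φ ℓ := by
          refine Finset.sum_congr rfl fun i _ => ?_
          exact hreindex (t i) (fun ℓ => (2*π)⁻¹ * ∫ φ in (0:ℝ)..(2*π), F φ ℓ) hsupp1 (hgrid1 i)
      _ = (p:ℝ) * ∑ ℓ ∈ B, (2*π)⁻¹ * ∫ φ in (0:ℝ)..(2*π), F φ ℓ := by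
          rw [Finset.sum_const, Finset.card_univ, Fintype.card_fin, nsmul_eq_mul]
  have hsum1b : (∑ j ∈ G, ∑ i : Fin p, (2*π)⁻¹ * ∫ φ in (0:ℝ)..(2*π), F φ (j - (t i - u)))
      = (p:ℝ) * ∑ ℓ ∈ B, (2*π)⁻¹ * ∫ φ in (0:ℝ)..(2*π), F φ ℓ := by
    rw [Finset.sum_comm]
    calc ∑ i : Fin p, ∑ j ∈ G, (2*π)⁻¹ * ∫ φ in (0:ℝ)..(2*π), F φ (j - (t i - u))
        = ∑ _i : Fin p, ∑ ℓ ∈ B, (2*π)⁻¹ * ∫ φ in (0:ℝ)..(2*π), F φ ℓ := by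
          refine Finset.sum_congr rfl fun i _ => ?_
          exact hreindex (t i - u) (fun ℓ => (2*π)⁻¹ * ∫ φ in (0:ℝ)..(2*π), F φ ℓ) hsupp1 (hgridu i)
      _ = (p:ℝ) * ∑ ℓ ∈ B, (2*π)⁻¹ * ∫ φ in (0:ℝ)..(2*π), F φ ℓ := by
          rw [Finset.sum_const, Finset.card_univ, Fintype.card_fin, nsmul_eq_mul]
  have hsum1c : (∑ j ∈ G, ∑ i : Fin p, (2*π)⁻¹ * ∫ φ in (0:ℝ)..(2*π), F φ (j - (t i - v)))
      = (p:ℝ) * ∑ ℓ ∈ B, (2*π)⁻¹ * ∫ φ in (0:ℝ)..(2*π), F φ ℓ := by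
    rw [Finset.sum_comm]
    calc ∑ i : Fin p, ∑ j ∈ G, (2*π)⁻¹ * ∫ φ in (0:ℝ)..(2*π), F φ (j - (t i - v))
        = ∑ _i : Fin p, ∑ ℓ ∈ B, (2*π)⁻¹ * ∫ φ in (0:ℝ)..(2*π), F φ ℓ := by
          refine Finset.sum_congr rfl fun i _ => ?_
          exact hreindex (t i - v) (fun ℓ => (2*π)⁻¹ * ∫ φ in (0:ℝ)..(2*π), F φ ℓ) hsupp1 (hgridv i)
      _ = (p:ℝ) * ∑ ℓ ∈ B, (2*π)⁻¹ * ∫ φ in (0:ℝ)..(2*π), F φ ℓ := by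
          rw [Finset.sum_const, Finset.card_univ, Fintype.card_fin, nsmul_eq_mul]
  -- final assembly
  have hN0 : ((N:ℝ)) ≠ 0 := Nat.cast_ne_zero.mpr (by omega)
  have hn0 : ((n:ℝ)) ≠ 0 := Nat.cast_ne_zero.mpr (by omega)
  have hLHS1 : ∀ ω : Ω, (∑' j : ℤ × ℤ, M ω j * M ω (j+u) * M ω (j+v))
      = ∑ j ∈ G, M ω j * M ω (j+u) * M ω (j+v) := by
    intro ω
    refine tsum_eq_sum (fun j hj => ?_)
    have hng : ¬ InGrid N j := fun hc => hj ((hGmem j).mpr hc)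
    rw [hM ω j, if_neg hng, zero_mul, zero_mul]
  have htsum3 : (∫ φ in (0:ℝ)..(2*π), ∑' ℓ : ℤ × ℤ, F φ ℓ * F φ (ℓ + u) * F φ (ℓ + v))
      = ∑ ℓ ∈ B, ∫ φ in (0:ℝ)..(2*π), F φ ℓ * F φ (ℓ + u) * F φ (ℓ + v) := by
    rw [intervalIntegral.integral_congr
      (g := fun φ => ∑ ℓ ∈ B, F φ ℓ * F φ (ℓ + u) * F φ (ℓ + v))
      (fun φ _ => tsum_eq_sum (fun ℓ hℓ => by rw [hBzero ℓ hℓ φ, zero_mul, zero_mul]))]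
    exact intervalIntegral.integral_finset_sum
      (fun ℓ _ => (((hFcont _).mul (hFcont _)).mul (hFcont _)).intervalIntegrable _ _)
  have htsum1 : (∫ φ in (0:ℝ)..(2*π), ∑' ℓ : ℤ × ℤ, F φ ℓ)
      = ∑ ℓ ∈ B, ∫ φ in (0:ℝ)..(2*π), F φ ℓ := by
    rw [intervalIntegral.integral_congr (g := fun φ => ∑ ℓ ∈ B, F φ ℓ)
      (fun φ _ => tsum_eq_sum (fun ℓ hℓ => hBzero ℓ hℓ φ))]
    exact intervalIntegral.integral_finset_sum (fun ℓ _ => (hFcont _).intervalIntegrable _ _)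
  calc ∫ ω, (1 / (N:ℝ)^2 * ∑' j : ℤ × ℤ, M ω j * M ω (j + u) * M ω (j + v)) ∂ℙ
      = 1 / (N:ℝ)^2 * ∫ ω, (∑' j : ℤ × ℤ, M ω j * M ω (j + u) * M ω (j + v)) ∂ℙ :=
        MeasureTheory.integral_const_mul _ _
    _ = 1 / (N:ℝ)^2 * ∫ ω, (∑ j ∈ G, M ω j * M ω (j + u) * M ω (j + v)) ∂ℙ := by
        rw [integral_congr_ae (ae_of_all _ hLHS1)]
    _ = 1 / (N:ℝ)^2 * ∑ j ∈ G, ∫ ω, M ω j * M ω (j + u) * M ω (j + v) ∂ℙ := by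
        rw [integral_finset_sum G (fun j _ => hMint j)]
    _ = 1 / (N:ℝ)^2 * ∑ j ∈ G,
        ((∑ i : Fin p, (2*π)⁻¹ * ∫ φ in (0:ℝ)..(2*π),
            F φ (j - t i) * F φ (j - t i + u) * F φ (j - t i + v))
        + ((if u = v then σ^2 else 0) * ∑ i : Fin p, (2*π)⁻¹ * ∫ φ in (0:ℝ)..(2*π), F φ (j - t i))
        + ((if v = 0 then σ^2 else 0) * ∑ i : Fin p, (2*π)⁻¹ * ∫ φ in (0:ℝ)..(2*π),
            F φ (j - (t i - u)))
        + ((if u = 0 then σ^2 else 0) * ∑ i : Fin p, (2*π)⁻¹ * ∫ φ in (0:ℝ)..(2*π),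
            F φ (j - (t i - v)))) :=
        congrArg (fun z => 1 / (N:ℝ)^2 * z) (Finset.sum_congr rfl hI)
    _ = 1 / (N:ℝ)^2 *
        ((∑ j ∈ G, ∑ i : Fin p, (2*π)⁻¹ * ∫ φ in (0:ℝ)..(2*π),
            F φ (j - t i) * F φ (j - t i + u) * F φ (j - t i + v))
        + ((if u = v then σ^2 else 0) * ∑ j ∈ G, ∑ i : Fin p, (2*π)⁻¹ * ∫ φ in (0:ℝ)..(2*π),
            F φ (j - t i))
        + ((if v = 0 then σ^2 else 0) * ∑ j ∈ G, ∑ i : Fin p, (2*π)⁻¹ * ∫ φ in (0:ℝ)..(2*π),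
            F φ (j - (t i - u)))
        + ((if u = 0 then σ^2 else 0) * ∑ j ∈ G, ∑ i : Fin p, (2*π)⁻¹ * ∫ φ in (0:ℝ)..(2*π),
            F φ (j - (t i - v)))) := by
        rw [Finset.sum_add_distrib, Finset.sum_add_distrib, Finset.sum_add_distrib,
          ← Finset.mul_sum, ← Finset.mul_sum, ← Finset.mul_sum]
    _ = 1 / (N:ℝ)^2 *
        ((p:ℝ) * (∑ ℓ ∈ B, (2*π)⁻¹ * ∫ φ in (0:ℝ)..(2*π), F φ ℓ * F φ (ℓ + u) * F φ (ℓ + v))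
        + ((if u = v then σ^2 else 0) * ((p:ℝ) * ∑ ℓ ∈ B, (2*π)⁻¹ * ∫ φ in (0:ℝ)..(2*π), F φ ℓ))
        + ((if v = 0 then σ^2 else 0) * ((p:ℝ) * ∑ ℓ ∈ B, (2*π)⁻¹ * ∫ φ in (0:ℝ)..(2*π), F φ ℓ))
        + ((if u = 0 then σ^2 else 0) * ((p:ℝ) * ∑ ℓ ∈ B, (2*π)⁻¹ * ∫ φ in (0:ℝ)..(2*π), F φ ℓ))) := by
        rw [hsum3, hsum1a, hsum1b, hsum1c]
    _ = (4 * (p : ℝ) * (n : ℝ) ^ 2 / (N : ℝ) ^ 2) *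
          (1 / (4 * (n : ℝ) ^ 2) *
            (1 / (2 * π) *
              ∫ φ in (0:ℝ)..(2 * π), ∑' ℓ : ℤ × ℤ, F φ ℓ * F φ (ℓ + u) * F φ (ℓ + v))) +
        (4 * (p : ℝ) * (n : ℝ) ^ 2 / (N : ℝ) ^ 2) *
          (1 / (4 * (n : ℝ) ^ 2) *
            (1 / (2 * π) * ∫ φ in (0:ℝ)..(2 * π), ∑' ℓ : ℤ × ℤ, F φ ℓ)) *
          σ ^ 2 *
          ((if u = 0 then 1 else 0) + (if v = 0 then 1 else 0) +
            (if u - v = 0 then 1 else 0)) := by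
        rw [htsum3, htsum1]
        simp only [← Finset.mul_sum, sub_eq_zero]
        rw [show (if u = v then σ^2 else (0:ℝ)) = σ^2 * (if u = v then 1 else 0) from by
            by_cases h : u = v <;> simp [h],
          show (if v = 0 then σ^2 else (0:ℝ)) = σ^2 * (if v = 0 then 1 else 0) from by
            by_cases h : v = 0 <;> simp [h],
          show (if u = 0 then σ^2 else (0:ℝ)) = σ^2 * (if u = 0 then 1 else 0) from by
            by_cases h : u = 0 <;> simp [h]]
        set d3 : ℝ := (if u = v then (1:ℝ) else 0) with hd3
        set d2 : ℝ := (if v = 0 then (1:ℝ) else 0) with hd2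
        set d1 : ℝ := (if u = 0 then (1:ℝ) else 0) with hd1
        field_simp
        ring
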